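/- If a Hermitian matrix A ∈ C^{n×n} satisfies ‖A² − A‖_F ≤ ε, then there exists an orthogonal projector P (P² = P, P Hermitian) with ‖A − P‖_F ≤ ε + 4ε². -/

import Mathlib

open Matrix


noncomputable def frob {n : ℕ} (A : Matrix (Fin n) (Fin n) ℂ) : ℝ :=
  Real.sqrt (∑ i, ∑ j, ‖A i j‖ ^ 2)

lemma frob_eq_trace {n : ℕ} (A : Matrix (Fin n) (Fin n) ℂ) :
    (∑ i, ∑ j, ‖A i j‖ ^ 2) = ((Aᴴ * A).trace).re := by
  simp only [Matrix.trace, Matrix.mul_apply, Matrix.conjTranspose_apply, Matrix.diag,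
    Complex.re_sum]
  rw [Finset.sum_comm]
  congr 1; ext i; congr 1; ext j
  rw [Complex.star_def, ← Complex.normSq_eq_conj_mul_self]
  simp [Complex.sq_norm]

lemma frob_conj {n : ℕ} (U : Matrix.unitaryGroup (Fin n) ℂ) (M : Matrix (Fin n) (Fin n) ℂ) :
    frob ((U : Matrix (Fin n) (Fin n) ℂ) * M * star (U : Matrix (Fin n) (Fin n) ℂ)) = frob M := by
  unfold frob
  rw [frob_eq_trace, frob_eq_trace]
  congr 2
  have hU : star (U : Matrix (Fin n) (Fin n) ℂ) * U = 1 := Unitary.coe_star_mul_self U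
  have hU' : (U : Matrix (Fin n) (Fin n) ℂ) * star (U : Matrix (Fin n) (Fin n) ℂ) = 1 :=
    Unitary.coe_mul_star_self U
  have : ((U : Matrix (Fin n) (Fin n) ℂ) * M * star (U : Matrix (Fin n) (Fin n) ℂ))ᴴ
      = (U : Matrix (Fin n) (Fin n) ℂ) * Mᴴ * star (U : Matrix (Fin n) (Fin n) ℂ) := by
    simp [conjTranspose_mul, mul_assoc, star_eq_conjTranspose]
  rw [this]
  rw [show (U : Matrix (Fin n) (Fin n) ℂ) * Mᴴ * star (U : Matrix (Fin n) (Fin n) ℂ) *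
      ((U : Matrix (Fin n) (Fin n) ℂ) * M * star (U : Matrix (Fin n) (Fin n) ℂ))
      = (U : Matrix (Fin n) (Fin n) ℂ) * (Mᴴ * (star (U : Matrix (Fin n) (Fin n) ℂ) *
        (U : Matrix (Fin n) (Fin n) ℂ)) * M) * star (U : Matrix (Fin n) (Fin n) ℂ) by
    noncomm_ring]
  rw [hU, mul_one]
  rw [Matrix.trace_mul_cycle, ← mul_assoc, hU, one_mul]

lemma frob_diagonal {n : ℕ} (v : Fin n → ℂ) :
    frob (Matrix.diagonal v) = Real.sqrt (∑ i, ‖v i‖ ^ 2) := by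
  unfold frob
  congr 1
  congr 1; ext i
  rw [Finset.sum_eq_single i]
  · simp
  · intro j _ hj; simp [Matrix.diagonal_apply_ne' v hj]
  · simp

noncomputable def rnd (x : ℝ) : ℝ := if 1/2 ≤ x then 1 else 0

lemma rnd_key (x : ℝ) : |x - rnd x| ≤ |x^2 - x| + 4 * |x^2 - x|^2 := by
  have he : |x^2 - x| = |x| * |x - 1| := by
    rw [← abs_mul]; ring_nf
  rw [he]
  unfold rnd
  split_ifs with hx
  · have h1 : |x| = x := abs_of_nonneg (by linarith)
    have h2 : (0:ℝ) ≤ |x - 1| := abs_nonneg _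
    have h3 : -(x-1) ≤ |x - 1| := neg_le_abs _
    rw [h1]
    have k1 : |x-1| * (|x-1| - (1 - x)) ≥ 0 := mul_nonneg h2 (by linarith)
    have k2 : |x-1|^2 * (4*x^2 - 1) ≥ 0 :=
      mul_nonneg (sq_nonneg _) (by nlinarith)
    nlinarith [k1, k2]
  · have h2 : (0:ℝ) ≤ |x| := abs_nonneg _
    have h3 : -(x-1) ≤ |x - 1| := neg_le_abs _
    have h5 : x ≤ |x| := le_abs_self _
    have h6 : (1:ℝ)/2 ≤ |x - 1| := by linarith
    rw [sub_zero]
    have k1 : |x| * (|x| - (1 - |x-1|)) ≥ 0 := mul_nonneg h2 (by linarith)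
    have k2 : |x|^2 * (4*|x-1|^2 - 1) ≥ 0 :=
      mul_nonneg (sq_nonneg _) (by nlinarith)
    nlinarith [k1, k2]

lemma rnd_idem (x : ℝ) : rnd x * rnd x = rnd x := by
  unfold rnd; split_ifs <;> ring

lemma sum_key {n : ℕ} (e d : Fin n → ℝ) (he : ∀ i, 0 ≤ e i) (hd : ∀ i, 0 ≤ d i)
    (hde : ∀ i, d i ≤ e i + 4 * (e i)^2) (ε : ℝ) (hε : Real.sqrt (∑ i, e i ^ 2) ≤ ε) :
    Real.sqrt (∑ i, d i ^ 2) ≤ ε + 4 * ε ^ 2 := by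
  have hε0 : 0 ≤ ε := le_trans (Real.sqrt_nonneg _) hε
  have hS0 : 0 ≤ ∑ i, e i ^ 2 := Finset.sum_nonneg fun i _ => sq_nonneg _
  have hS : ∑ i, e i ^ 2 ≤ ε ^ 2 := by
    have := Real.sq_sqrt hS0
    nlinarith [Real.sqrt_nonneg (∑ i, e i ^ 2)]
  have hei : ∀ i, e i ≤ ε := by
    intro i
    have h1 : e i ^ 2 ≤ ∑ j, e j ^ 2 :=
      Finset.single_le_sum (fun j _ => sq_nonneg (e j)) (Finset.mem_univ i)
    nlinarith [he i]
  have hptw : ∀ i, d i ^ 2 ≤ (1 + 4 * ε)^2 * e i ^ 2 := by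
    intro i
    have h1 : d i ≤ e i * (1 + 4 * ε) := by nlinarith [hde i, he i, hei i]
    nlinarith [hd i, he i, mul_nonneg (he i) hε0]
  have hsum : ∑ i, d i ^ 2 ≤ (ε + 4 * ε ^ 2) ^ 2 := by
    calc ∑ i, d i ^ 2 ≤ ∑ i, (1 + 4 * ε)^2 * e i ^ 2 := Finset.sum_le_sum fun i _ => hptw i
    _ = (1 + 4 * ε)^2 * ∑ i, e i ^ 2 := by rw [Finset.mul_sum]
    _ ≤ (1 + 4 * ε)^2 * ε ^ 2 := by
        apply mul_le_mul_of_nonneg_left hS (sq_nonneg _)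
    _ = (ε + 4 * ε ^ 2) ^ 2 := by ring
  calc Real.sqrt (∑ i, d i ^ 2) ≤ Real.sqrt ((ε + 4 * ε ^ 2) ^ 2) := Real.sqrt_le_sqrt hsum
  _ = ε + 4 * ε ^ 2 := Real.sqrt_sq (by nlinarith)

theorem stmt_6 {n : ℕ} (A : Matrix (Fin n) (Fin n) ℂ) (hA : A.IsHermitian) (ε : ℝ)
    (h : frob (A * A - A) ≤ ε) :
    ∃ P : Matrix (Fin n) (Fin n) ℂ, P.IsHermitian ∧ P * P = P ∧
      frob (A - P) ≤ ε + 4 * ε ^ 2 := by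
  classical
  set U := hA.eigenvectorUnitary with hUdef
  set μ := hA.eigenvalues with hμdef
  have hU2 : star (U : Matrix (Fin n) (Fin n) ℂ) * U = 1 := Unitary.coe_star_mul_self U
  have hU1 : (U : Matrix (Fin n) (Fin n) ℂ) * star (U : Matrix (Fin n) (Fin n) ℂ) = 1 :=
    Unitary.coe_mul_star_self U
  set v : Fin n → ℂ := fun i => ((rnd (μ i) : ℝ) : ℂ) with hvdef
  set w : Fin n → ℂ := fun i => ((μ i : ℝ) : ℂ) with hwdef
  have hAeq : A = (U : Matrix (Fin n) (Fin n) ℂ) * Matrix.diagonal w *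
      star (U : Matrix (Fin n) (Fin n) ℂ) := hA.spectral_theorem
  refine ⟨(U : Matrix (Fin n) (Fin n) ℂ) * Matrix.diagonal v *
      star (U : Matrix (Fin n) (Fin n) ℂ), ?_, ?_, ?_⟩
  · -- Hermitian
    unfold Matrix.IsHermitian
    have hv : star v = v := by
      funext i; simp [hvdef, Complex.conj_ofReal]
    simp [Matrix.conjTranspose_mul, Matrix.diagonal_conjTranspose, hv, mul_assoc,
      Matrix.star_eq_conjTranspose]
  · -- idempotent
    have : Matrix.diagonal v * Matrix.diagonal v = Matrix.diagonal v := by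
      rw [Matrix.diagonal_mul_diagonal]
      have hvv : (fun i => v i * v i) = v := by
        funext i; simp only [hvdef]; rw [← Complex.ofReal_mul, rnd_idem]
      exact congrArg _ hvv
    calc (U : Matrix (Fin n) (Fin n) ℂ) * Matrix.diagonal v * star (U : Matrix (Fin n) (Fin n) ℂ) *
        ((U : Matrix (Fin n) (Fin n) ℂ) * Matrix.diagonal v * star (U : Matrix (Fin n) (Fin n) ℂ))
        = (U : Matrix (Fin n) (Fin n) ℂ) * (Matrix.diagonal v * (star (U : Matrix (Fin n) (Fin n) ℂ) *
          (U : Matrix (Fin n) (Fin n) ℂ)) * Matrix.diagonal v) * star (U : Matrix (Fin n) (Fin n) ℂ) := by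
          noncomm_ring
    _ = (U : Matrix (Fin n) (Fin n) ℂ) * Matrix.diagonal v * star (U : Matrix (Fin n) (Fin n) ℂ) := by
          rw [hU2, mul_one, this]
  · -- the bound
    have hAA : A * A - A = (U : Matrix (Fin n) (Fin n) ℂ) *
        Matrix.diagonal (fun i => w i * w i - w i) * star (U : Matrix (Fin n) (Fin n) ℂ) := by
      rw [hAeq]
      rw [show ((U : Matrix (Fin n) (Fin n) ℂ) * Matrix.diagonal w * star (U : Matrix (Fin n) (Fin n) ℂ)) *
        ((U : Matrix (Fin n) (Fin n) ℂ) * Matrix.diagonal w * star (U : Matrix (Fin n) (Fin n) ℂ))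
        = (U : Matrix (Fin n) (Fin n) ℂ) * (Matrix.diagonal w * (star (U : Matrix (Fin n) (Fin n) ℂ) *
          (U : Matrix (Fin n) (Fin n) ℂ)) * Matrix.diagonal w) * star (U : Matrix (Fin n) (Fin n) ℂ) from by
          noncomm_ring]
      rw [hU2, mul_one, Matrix.diagonal_mul_diagonal]
      rw [← Matrix.sub_mul, ← Matrix.mul_sub, ← Matrix.diagonal_sub]
    have hAP : A - ((U : Matrix (Fin n) (Fin n) ℂ) * Matrix.diagonal v * star (U : Matrix (Fin n) (Fin n) ℂ))
        = (U : Matrix (Fin n) (Fin n) ℂ) * Matrix.diagonal (fun i => w i - v i) *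
          star (U : Matrix (Fin n) (Fin n) ℂ) := by
      rw [hAeq, ← Matrix.sub_mul, ← Matrix.mul_sub, ← Matrix.diagonal_sub]
    rw [hAP, frob_conj, frob_diagonal]
    rw [hAA, frob_conj, frob_diagonal] at h
    have hnorm1 : ∀ i, ‖w i * w i - w i‖ = |μ i ^ 2 - μ i| := by
      intro i
      simp only [hwdef]
      rw [← Complex.ofReal_mul, ← Complex.ofReal_sub, Complex.norm_real]
      congr 1; ring
    have hnorm2 : ∀ i, ‖w i - v i‖ = |μ i - rnd (μ i)| := by
      intro i
      simp only [hwdef, hvdef]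
      rw [← Complex.ofReal_sub, Complex.norm_real, Real.norm_eq_abs]
    simp only [hnorm1] at h
    simp only [hnorm2]
    exact sum_key (fun i => |μ i ^ 2 - μ i|) (fun i => |μ i - rnd (μ i)|)
      (fun i => abs_nonneg _) (fun i => abs_nonneg _)
      (fun i => by simpa [sq_abs] using rnd_key (μ i)) ε h
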